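/- Ordered top-k distribution of weighted reservoir sampling keys (Efraimidis–Spirakis): let U_1,…,U_n be independent random variables on a probability space, each uniformly distributed on the interval (0,1), let w_1,…,w_n > 0 with Z = Σ_{i=1}^n w_i, and define the reservoir keys R_i = U_i^{1/w_i}. Then for any k ≤ n and any sequence of distinct indices i_1,…,i_k, the probability of the event {R_{i_1} > R_{i_2} > ⋯ > R_{i_k}, and R_{i_k} > R_m for every m ∉ {i_1,…,i_k}} equals Π_{j=1}^k w_{i_j} / (Z − Σ_{l<j} w_{i_l}). In other words, the indices achieving the k largest keys, listed in decreasing key order, are distributed as sampling k items without replacement with probabilities proportional to the weights. -/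

import Mathlib

open MeasureTheory


open Set

noncomputable def resMeas (c : ℝ) : Measure ℝ :=
  (volume.restrict (Set.Ioo 0 1)).map (fun u : ℝ => u ^ (1/c))

lemma meas_g (c : ℝ) : Measurable fun u : ℝ => u ^ (1/c) := by fun_prop

instance : IsProbabilityMeasure (volume.restrict (Set.Ioo (0:ℝ) 1)) :=
  ⟨by simp⟩

instance (c : ℝ) : IsProbabilityMeasure (resMeas c) :=
  Measure.isProbabilityMeasure_map (meas_g c).aemeasurable

lemma resMeas_compl {c : ℝ} (hc : 0 < c) : resMeas c (Set.Ioo 0 1)ᶜ = 0 := by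
  rw [resMeas, Measure.map_apply (meas_g c) measurableSet_Ioo.compl,
    Measure.restrict_apply (measurableSet_Ioo.compl.preimage (meas_g c))]
  have : (fun u : ℝ => u ^ (1/c)) ⁻¹' (Set.Ioo 0 1)ᶜ ∩ Set.Ioo 0 1 = ∅ := by
    ext u
    simp only [Set.mem_inter_iff, Set.mem_preimage, Set.mem_compl_iff, Set.mem_Ioo,
      Set.mem_empty_iff_false, iff_false, not_and]
    intro h h0 h1
    exact h (Real.rpow_pos_of_pos h0 _) (Real.rpow_lt_one h0.le h1 (by positivity))
  rw [this]; exact measure_empty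

lemma pre_Iio {c t : ℝ} (hc : 0 < c) (ht : 0 < t) :
    (fun u : ℝ => u ^ (1/c)) ⁻¹' (Set.Iio t) ∩ Set.Ioo 0 1 = Set.Ioo 0 (min (t ^ c) 1) := by
  ext u
  simp only [Set.mem_inter_iff, Set.mem_preimage, Set.mem_Iio, Set.mem_Ioo, lt_min_iff]
  constructor
  · rintro ⟨h, h0, h1⟩
    refine ⟨h0, ?_, h1⟩
    have := Real.rpow_lt_rpow (Real.rpow_nonneg h0.le _) h hc
    rwa [one_div, Real.rpow_inv_rpow h0.le hc.ne'] at this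
  · rintro ⟨h0, h, h1⟩
    refine ⟨?_, h0, h1⟩
    have := Real.rpow_lt_rpow h0.le h (by positivity : (0:ℝ) < 1/c)
    rw [one_div] at this ⊢
    rwa [Real.rpow_rpow_inv ht.le hc.ne'] at this

lemma map_mul_restrict {a : ℝ} (ha : 0 < a) :
    (volume.restrict (Set.Ioo 0 1)).map (fun u : ℝ => a * u) =
      ENNReal.ofReal a⁻¹ • volume.restrict (Set.Ioo 0 a) := by
  have hpre : (fun u : ℝ => a * u) ⁻¹' (Set.Ioo 0 a) = Set.Ioo 0 1 := by
    rw [Set.preimage_const_mul_Ioo₀ _ _ ha, zero_div, div_self ha.ne']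
  rw [← hpre, ← Measure.restrict_map (measurable_const_mul a) measurableSet_Ioo,
    Real.map_volume_mul_left ha.ne', Measure.restrict_smul, abs_of_pos (inv_pos.2 ha)]

lemma resMeas_restrict {c t : ℝ} (hc : 0 < c) (ht : t ∈ Set.Ioo (0:ℝ) 1) :
    (resMeas c).restrict (Set.Iio t) =
      ENNReal.ofReal (t ^ c) • (resMeas c).map (fun x => t * x) := by
  have htc : 0 < t ^ c := Real.rpow_pos_of_pos ht.1 c
  have htc1 : t ^ c < 1 := Real.rpow_lt_one ht.1.le ht.2 hc
  rw [resMeas, Measure.restrict_map (meas_g c) measurableSet_Iio,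
    Measure.restrict_restrict (measurableSet_Iio.preimage (meas_g c)), pre_Iio hc ht.1,
    min_eq_left htc1.le, Measure.map_map (measurable_const_mul t) (meas_g c)]
  have hcongr : ((fun x : ℝ => t * x) ∘ (fun u : ℝ => u ^ (1/c)))
      =ᵐ[volume.restrict (Set.Ioo 0 1)] fun u => (t ^ c * u) ^ (1/c) := by
    filter_upwards [self_mem_ae_restrict measurableSet_Ioo] with u hu
    show t * u ^ (1/c) = (t ^ c * u) ^ (1/c)
    rw [Real.mul_rpow htc.le hu.1.le, one_div, Real.rpow_rpow_inv ht.1.le hc.ne']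
  have hcomp : (fun u : ℝ => (t ^ c * u) ^ (1/c)) =
      (fun u : ℝ => u ^ (1/c)) ∘ (fun u => t ^ c * u) := rfl
  rw [Measure.map_congr hcongr, hcomp,
    ← Measure.map_map (meas_g c) (measurable_const_mul (t ^ c)),
    map_mul_restrict htc, Measure.map_smul, smul_smul, ← ENNReal.ofReal_mul htc.le,
    mul_inv_cancel₀ htc.ne', ENNReal.ofReal_one, one_smul]

section PiLemmas

variable {N : ℕ}

lemma measurable_scale (t : ℝ) : Measurable (fun (x : Fin N → ℝ) m => t * x m) :=
  measurable_pi_lambda _ fun m => (measurable_pi_apply m : Measurable fun x : Fin N → ℝ => x m).const_mul t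

lemma pi_restrict_smul (w : Fin N → ℝ) (hw : ∀ m, 0 < w m) {t : ℝ}
    (ht : t ∈ Set.Ioo (0:ℝ) 1) :
    Measure.pi (fun m => (resMeas (w m)).restrict (Set.Iio t)) =
      ENNReal.ofReal (t ^ (∑ m, w m)) •
        (Measure.pi fun m => resMeas (w m)).map (fun x m => t * x m) := by
  refine Measure.pi_eq fun s hs => ?_
  have hpre : (fun (x : Fin N → ℝ) m => t * x m) ⁻¹' (Set.pi Set.univ s) =
      Set.pi Set.univ (fun m => (fun x => t * x) ⁻¹' s m) := by
    ext x; simp [Set.mem_pi]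
  rw [Measure.smul_apply, Measure.map_apply (measurable_scale t) (MeasurableSet.univ_pi hs),
    hpre, Measure.pi_pi, smul_eq_mul]
  have h1 : ENNReal.ofReal (t ^ (∑ m, w m)) = ∏ m, ENNReal.ofReal (t ^ w m) := by
    rw [Real.rpow_sum_of_pos ht.1, ENNReal.ofReal_prod_of_nonneg
      (fun m _ => Real.rpow_nonneg ht.1.le _)]
  rw [h1, ← Finset.prod_mul_distrib]
  refine Finset.prod_congr rfl fun m _ => ?_
  rw [resMeas_restrict (hw m) ht, Measure.smul_apply, smul_eq_mul,
    Measure.map_apply (measurable_const_mul t) (hs m)]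

lemma pi_restrict_eq (w : Fin N → ℝ) {t : ℝ} :
    Measure.pi (fun m => (resMeas (w m)).restrict (Set.Iio t)) =
      (Measure.pi fun m => resMeas (w m)).restrict (Set.pi Set.univ fun _ => Set.Iio t) := by
  refine Measure.pi_eq fun s hs => ?_
  rw [Measure.restrict_apply (MeasurableSet.univ_pi hs), ← Set.pi_inter_distrib,
    Measure.pi_pi]
  exact Finset.prod_congr rfl fun m _ => (Measure.restrict_apply (hs m)).symm

end PiLemmas

section Event

def Ev {n k : ℕ} (i : Fin k → Fin n) : Set (Fin n → ℝ) :=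
  {x | (∀ a b : Fin k, a < b → x (i b) < x (i a)) ∧
    ∀ (j : Fin k) (m : Fin n), m ∉ Set.range i → x m < x (i j)}

lemma measurableSet_lt_coord {n : ℕ} (p q : Fin n) :
    MeasurableSet {x : Fin n → ℝ | x p < x q} :=
  measurableSet_lt (measurable_pi_apply p) (measurable_pi_apply q)

lemma measurableSet_Ev {n k : ℕ} (i : Fin k → Fin n) : MeasurableSet (Ev i) := by
  have : Ev i = (⋂ (a : Fin k) (b : Fin k) (_ : a < b), {x : Fin n → ℝ | x (i b) < x (i a)}) ∩
      ⋂ (j : Fin k) (m : Fin n) (_ : m ∉ Set.range i), {x : Fin n → ℝ | x m < x (i j)} := by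
    ext x; simp [Ev]
  rw [this]
  exact (MeasurableSet.iInter fun a => MeasurableSet.iInter fun b =>
      MeasurableSet.iInter fun _ => measurableSet_lt_coord _ _).inter
    (MeasurableSet.iInter fun j => MeasurableSet.iInter fun m =>
      MeasurableSet.iInter fun _ => measurableSet_lt_coord _ _)

lemma Ev_scale {n k : ℕ} (i : Fin k → Fin n) {t : ℝ} (ht : 0 < t) :
    (fun (x : Fin n → ℝ) m => t * x m) ⁻¹' Ev i = Ev i := by
  ext x
  simp only [Ev, Set.mem_preimage, Set.mem_setOf_eq, mul_lt_mul_iff_right₀ ht]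

end Event

lemma pi_Ev_box {N k : ℕ} (w : Fin N → ℝ) (hw : ∀ m, 0 < w m) (i : Fin k → Fin N)
    {t : ℝ} (ht : t ∈ Set.Ioo (0:ℝ) 1) :
    Measure.pi (fun m => resMeas (w m))
        (Ev i ∩ Set.pi Set.univ fun _ => Set.Iio t) =
      ENNReal.ofReal (t ^ (∑ m, w m)) * Measure.pi (fun m => resMeas (w m)) (Ev i) := by
  rw [← Measure.restrict_apply (measurableSet_Ev i), ← pi_restrict_eq w,
    pi_restrict_smul w hw ht, Measure.smul_apply, smul_eq_mul,
    Measure.map_apply (measurable_scale t) (measurableSet_Ev i), Ev_scale i ht.1]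

lemma lintegral_rpow_resMeas {c Z : ℝ} (hc : 0 < c) (hZ : 0 ≤ Z) :
    ∫⁻ t, ENNReal.ofReal (t ^ Z) ∂(resMeas c) = ENNReal.ofReal (c / (Z + c)) := by
  have hmeas : Measurable fun t : ℝ => ENNReal.ofReal (t ^ Z) := by fun_prop
  rw [resMeas, lintegral_map hmeas (meas_g c)]
  have hp : (0:ℝ) ≤ Z / c := by positivity
  have hcongr : ∀ᵐ u ∂(volume.restrict (Set.Ioo (0:ℝ) 1)),
      ENNReal.ofReal ((u ^ (1/c)) ^ Z) = ENNReal.ofReal (u ^ (Z / c)) := by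
    filter_upwards [self_mem_ae_restrict measurableSet_Ioo] with u hu
    rw [← Real.rpow_mul hu.1.le, one_div, div_eq_mul_inv, mul_comm Z]
  rw [lintegral_congr_ae hcongr]
  have hint : IntegrableOn (fun u : ℝ => u ^ (Z / c)) (Set.Ioo 0 1) volume := by
    refine ((intervalIntegral.intervalIntegrable_rpow' (by linarith : (-1:ℝ) < Z / c)).1).mono_set
      Set.Ioo_subset_Ioc_self
  have hnn : 0 ≤ᵐ[volume.restrict (Set.Ioo (0:ℝ) 1)] fun u : ℝ => u ^ (Z / c) := by
    filter_upwards [self_mem_ae_restrict measurableSet_Ioo] with u hu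
    exact Real.rpow_nonneg hu.1.le _
  rw [← ofReal_integral_eq_lintegral_ofReal hint hnn]
  congr 1
  have : ∫ u in Set.Ioo (0:ℝ) 1, u ^ (Z / c) = ∫ u in (0:ℝ)..1, u ^ (Z / c) := by
    rw [intervalIntegral.integral_of_le zero_le_one, ← integral_Ioc_eq_integral_Ioo]
  rw [this, integral_rpow (Or.inl (by linarith : (-1:ℝ) < Z / c))]
  rw [Real.one_rpow, Real.zero_rpow (by positivity : Z / c + 1 ≠ 0)]
  field_simp
  norm_num

lemma sum_Iio_succ' {k : ℕ} (f : Fin (k+1) → ℝ) (j : Fin k) :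
    ∑ l ∈ Finset.Iio j.succ, f l = f 0 + ∑ l ∈ Finset.Iio j, f l.succ := by
  have h : ∀ {m : ℕ} (j' : Fin m) (g : Fin m → ℝ),
      ∑ l ∈ Finset.Iio j', g l = ∑ l, if l < j' then g l else 0 := by
    intro m j' g
    have : Finset.Iio j' = Finset.univ.filter (· < j') := by ext l; simp
    rw [this, Finset.sum_filter]
  rw [h, h, Fin.sum_univ_succ]
  congr 1
  · simp [Fin.succ_pos]

lemma Iio_zero_fin {k : ℕ} : Finset.Iio (0 : Fin (k+1)) = ∅ := by
  ext l; simp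
lemma main_lemma (k : ℕ) : ∀ {n : ℕ} (w : Fin n → ℝ), (∀ m, 0 < w m) →
    ∀ (i : Fin k → Fin n), Function.Injective i →
    Measure.pi (fun m => resMeas (w m)) (Ev i) =
      ENNReal.ofReal
        (∏ j : Fin k, w (i j) / ((∑ m, w m) - ∑ l ∈ Finset.Iio j, w (i l))) := by
  induction k with
  | zero =>
    intro n w hw i hi
    have hEv : Ev i = Set.univ := by
      ext x
      simp only [Set.mem_univ, iff_true, Ev, Set.mem_setOf_eq]
      exact ⟨fun a => a.elim0, fun j => j.elim0⟩
    rw [hEv, measure_univ]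
    simp
  | succ k ih =>
    intro n w hw i hi
    rcases n with _ | N
    · exact (i 0).elim0
    set i0 := i 0 with hi0
    have hne : ∀ j : Fin k, i j.succ ≠ i0 := fun j h => Fin.succ_ne_zero j (hi h)
    choose i' hi' using fun j => Fin.exists_succAbove_eq (hne j)
    have hi'inj : Function.Injective i' := by
      intro a b hab
      have h2 : i a.succ = i b.succ := by rw [← hi' a, ← hi' b, hab]
      exact Fin.succ_injective _ (hi h2)
    set ν := fun j : Fin N => resMeas (w (i0.succAbove j)) with hν
    set C := Measure.pi ν (Ev i') with hC
    set W := ∑ j, w (i0.succAbove j) with hW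
    have hWnn : 0 ≤ W := Finset.sum_nonneg fun j _ => (hw _).le
    set T : Set (ℝ × (Fin N → ℝ)) :=
      {p | p.2 ∈ Ev i' ∩ Set.pi Set.univ fun _ => Set.Iio p.1} with hT
    have hTmeas : MeasurableSet T := by
      have h1 : T = (Prod.snd ⁻¹' Ev i') ∩ ⋂ m, {p : ℝ × (Fin N → ℝ) | p.2 m < p.1} := by
        ext p
        simp [hT, Set.mem_pi, Set.mem_iInter]
      rw [h1]
      exact ((measurableSet_Ev i').preimage measurable_snd).inter
        (MeasurableSet.iInter fun m => measurableSet_lt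
          (by fun_prop : Measurable fun p : ℝ × (Fin N → ℝ) => p.2 m) measurable_fst)
    have hpre : Ev i = (MeasurableEquiv.piFinSuccAbove (fun _ : Fin (N+1) => ℝ) i0) ⁻¹' T := by
      ext x
      have he : (MeasurableEquiv.piFinSuccAbove (fun _ : Fin (N+1) => ℝ) i0) x
          = (x i0, fun j => x (i0.succAbove j)) := rfl
      simp only [Set.mem_preimage, he, hT, Set.mem_setOf_eq, Set.mem_inter_iff, Set.mem_pi,
        Set.mem_univ, Set.mem_Iio, true_implies, Ev]
      constructor
      · rintro ⟨hchain, hout⟩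
        refine ⟨⟨?_, ?_⟩, ?_⟩
        · intro a b hab
          have h2 := hchain a.succ b.succ (Fin.succ_lt_succ_iff.mpr hab)
          rw [hi' a, hi' b]
          exact h2
        · intro j m' hm'
          have hnotin : i0.succAbove m' ∉ Set.range i := by
            rintro ⟨a, ha⟩
            rcases Fin.eq_zero_or_eq_succ a with rfl | ⟨a', rfl⟩
            · rw [← hi0] at ha
              exact Fin.succAbove_ne i0 m' ha.symm
            · refine hm' ⟨a', Fin.succAbove_right_injective (p := i0) ?_⟩
              rw [hi' a', ha]
          have h2 := hout j.succ _ hnotin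
          rw [hi' j]
          exact h2
        · intro m
          by_cases hmem : i0.succAbove m ∈ Set.range i
          · obtain ⟨a, ha⟩ := hmem
            rcases Fin.eq_zero_or_eq_succ a with rfl | ⟨a', rfl⟩
            · exact absurd ha.symm (Fin.succAbove_ne i0 m)
            · rw [← ha]
              exact hchain 0 a'.succ (Fin.succ_pos a')
          · exact hout 0 _ hmem
      · rintro ⟨⟨hchain', hout'⟩, hlt⟩
        constructor
        · intro a b hab
          rcases Fin.eq_zero_or_eq_succ b with rfl | ⟨b', rfl⟩
          · exact absurd hab (Fin.not_lt_zero a)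
          · rcases Fin.eq_zero_or_eq_succ a with rfl | ⟨a', rfl⟩
            · rw [← hi0, ← hi' b']
              exact hlt (i' b')
            · have h2 := hchain' a' b' (by rwa [Fin.succ_lt_succ_iff] at hab)
              rw [hi' a', hi' b'] at h2
              exact h2
        · intro j m hm
          have hmne : m ≠ i0 := fun h => hm ⟨0, (h ▸ hi0.symm)⟩
          obtain ⟨m', hm'eq⟩ := Fin.exists_succAbove_eq hmne
          have hm'notin : m' ∉ Set.range i' := by
            rintro ⟨a, ha⟩
            refine hm ⟨a.succ, ?_⟩
            rw [← hi' a, ha, hm'eq]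
          rcases Fin.eq_zero_or_eq_succ j with rfl | ⟨j', rfl⟩
          · rw [← hi0, ← hm'eq]
            exact hlt m'
          · have h2 := hout' j' m' hm'notin
            rw [hi' j', hm'eq] at h2
            exact h2
    rw [hpre,
      (measurePreserving_piFinSuccAbove (fun m : Fin (N+1) => resMeas (w m)) i0).measure_preimage_equiv,
      Measure.prod_apply hTmeas]
    have hsec : ∀ t : ℝ, Prod.mk t ⁻¹' T = Ev i' ∩ Set.pi Set.univ fun _ => Set.Iio t :=
      fun t => rfl
    have h0 : ∀ᵐ t ∂(resMeas (w i0)), t ∈ Set.Ioo (0:ℝ) 1 := by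
      rw [ae_iff]
      have : {t : ℝ | ¬ t ∈ Set.Ioo (0:ℝ) 1} = (Set.Ioo (0:ℝ) 1)ᶜ := rfl
      rw [this]
      exact resMeas_compl (hw i0)
    have hae : ∀ᵐ t ∂(resMeas (w i0)),
        Measure.pi ν (Prod.mk t ⁻¹' T) = ENNReal.ofReal (t ^ W) * C := by
      filter_upwards [h0] with t ht0
      rw [hsec t]
      exact pi_Ev_box (fun j => w (i0.succAbove j)) (fun j => hw _) i' ht0
    rw [lintegral_congr_ae hae,
      lintegral_mul_const C (by fun_prop : Measurable fun t : ℝ => ENNReal.ofReal (t ^ W)),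
      lintegral_rpow_resMeas (hw i0) hWnn]
    have hfrac : (0:ℝ) ≤ w i0 / (W + w i0) :=
      div_nonneg (hw _).le (by have := hw i0; linarith)
    rw [hC, hν, ih (fun m => w (i0.succAbove m)) (fun m => hw _) i' hi'inj,
      ← ENNReal.ofReal_mul hfrac]
    congr 1
    have hZ : ∑ m : Fin (N+1), w m = w i0 + W := Fin.sum_univ_succAbove w i0
    rw [Fin.prod_univ_succ]
    have hhead : w (i 0) / ((∑ m : Fin (N+1), w m) - ∑ l ∈ Finset.Iio (0 : Fin (k+1)), w (i l))
        = w i0 / (W + w i0) := by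
      rw [Iio_zero_fin, Finset.sum_empty, sub_zero, hZ, ← hi0, add_comm]
    rw [hhead]
    congr 1
    refine Finset.prod_congr rfl fun j _ => ?_
    rw [sum_Iio_succ' (fun l => w (i l)) j, hZ, hi' j]
    congr 1
    have h3 : ∑ l ∈ Finset.Iio j, w (i0.succAbove (i' l)) = ∑ l ∈ Finset.Iio j, w (i l.succ) :=
      Finset.sum_congr rfl fun l _ => by rw [hi' l]
    rw [h3, ← hW, ← hi0]
    ring

/-- Efraimidis–Spirakis: for i.i.d. `U₁,…,Uₙ` uniform on `(0,1)`, weights `wᵢ > 0` with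
`Z = Σ wᵢ`, and reservoir keys `Rᵢ = Uᵢ^{1/wᵢ}`, the probability that the distinct indices
`i 0, …, i (k-1)` achieve the `k` largest keys in decreasing order (so `R_{i_1} > ⋯ > R_{i_k}`
and `R_{i_k} > R_m` for every `m` outside the sample) equals
`Π_j w_{i_j} / (Z − Σ_{l<j} w_{i_l})`. -/
theorem reservoir_topk_distribution {Ω : Type*} [MeasurableSpace Ω] (P : Measure Ω)
    [IsProbabilityMeasure P] {n : ℕ} (U : Fin n → Ω → ℝ) (hmeas : ∀ m, Measurable (U m))
    (hindep : ProbabilityTheory.iIndepFun U P)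
    (hunif : ∀ m, P.map (U m) = volume.restrict (Set.Ioo (0 : ℝ) 1))
    (w : Fin n → ℝ) (hw : ∀ m, 0 < w m) (k : ℕ) (hk : 0 < k) (hkn : k ≤ n)
    (i : Fin k → Fin n) (hi : Function.Injective i) :
    P {ω | (∀ a b : Fin k, a < b → U (i b) ω ^ (1 / w (i b)) < U (i a) ω ^ (1 / w (i a))) ∧
        ∀ m : Fin n, m ∉ Set.range i →
          U m ω ^ (1 / w m) < U (i ⟨k - 1, by omega⟩) ω ^ (1 / w (i ⟨k - 1, by omega⟩))} =
      ENNReal.ofReal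
        (∏ j : Fin k, w (i j) / ((∑ m, w m) - ∑ l ∈ Finset.Iio j, w (i l))) := by
  classical
  set J : Ω → (Fin n → ℝ) := fun ω m => U m ω with hJ
  have hJmeas : Measurable J := measurable_pi_lambda _ fun m => hmeas m
  have hmapJ : P.map J = Measure.pi (fun _ : Fin n => volume.restrict (Set.Ioo (0:ℝ) 1)) := by
    refine (Measure.pi_eq fun s hs => ?_).symm
    rw [Measure.map_apply hJmeas (MeasurableSet.univ_pi hs)]
    have hpre : J ⁻¹' (Set.pi Set.univ s) = ⋂ m, U m ⁻¹' s m := by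
      ext ω; simp [hJ, Set.mem_pi]
    rw [hpre, hindep.meas_iInter (fun m => ⟨s m, hs m, rfl⟩)]
    exact Finset.prod_congr rfl fun m _ => by
      rw [← hunif m, Measure.map_apply (hmeas m) (hs m)]
  set G : (Fin n → ℝ) → (Fin n → ℝ) := fun x m => x m ^ (1 / w m) with hG
  have hGmeas : Measurable G :=
    measurable_pi_lambda _ fun m => (meas_g (w m)).comp (measurable_pi_apply m)
  have hmapG : (Measure.pi fun _ : Fin n => volume.restrict (Set.Ioo (0:ℝ) 1)).map G
      = Measure.pi (fun m => resMeas (w m)) := by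
    refine (Measure.pi_eq fun s hs => ?_).symm
    rw [Measure.map_apply hGmeas (MeasurableSet.univ_pi hs)]
    have hpre : G ⁻¹' (Set.pi Set.univ s) =
        Set.pi Set.univ (fun m => (fun u : ℝ => u ^ (1 / w m)) ⁻¹' s m) := by
      ext x; simp [hG, Set.mem_pi]
    rw [hpre, Measure.pi_pi]
    exact Finset.prod_congr rfl fun m _ => by
      rw [resMeas, Measure.map_apply (meas_g (w m)) (hs m)]
  have hlastlt : k - 1 < k := by omega
  set last : Fin k := ⟨k - 1, hlastlt⟩ with hlast
  have hset : {ω | (∀ a b : Fin k, a < b →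
        U (i b) ω ^ (1 / w (i b)) < U (i a) ω ^ (1 / w (i a))) ∧
      ∀ m : Fin n, m ∉ Set.range i →
        U m ω ^ (1 / w m) < U (i ⟨k - 1, by omega⟩) ω ^ (1 / w (i ⟨k - 1, by omega⟩))}
      = J ⁻¹' (G ⁻¹' Ev i) := by
    ext ω
    simp only [Set.mem_setOf_eq, Set.mem_preimage, hJ, hG, Ev]
    constructor
    · rintro ⟨hchain, hout⟩
      refine ⟨hchain, fun j m hm => lt_of_lt_of_le (hout m hm) ?_⟩
      have hj : j ≤ last := by
        have := j.2
        simp only [hlast, Fin.le_def]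
        omega
      rcases eq_or_lt_of_le hj with heq | hlt
      · rw [heq]
      · exact (hchain j last hlt).le
    · rintro ⟨hchain, hout⟩
      exact ⟨hchain, fun m hm => hout last m hm⟩
  rw [hset, ← Measure.map_apply hJmeas (hGmeas (measurableSet_Ev i)), hmapJ,
    ← Measure.map_apply hGmeas (measurableSet_Ev i), hmapG, main_lemma k w hw i hi]
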